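/- Let m be a positive integer or half-integer (2m ∈ ℕ), let n be a positive integer, and let p be an integer with 0 ≤ p < n. Let τ lie in the complex upper half-plane and z₁, z₂ ∈ ℂ with n·z₁ ∉ ℤ + ℤτ. Then for either choice of sign ε ∈ {+1, −1}: (1) ∑_{k=0}^{n−1} e^{2πipk/n} Φ₁^{[nm,0]}(τ, z₁ − k/n, z₂ + εk/n) = n ∑_{j∈ℤ} e^{2πinmj(z₁+z₂)+2πipz₁} q^{nmj²+pj}/(1 − e^{2πinz₁} q^{nj}); and (2) ∑_{k=0}^{n−1} e^{−2πipk/n} Φ₁^{[nm,0]}(τ, z₁ + k/n, z₂ + εk/n) = n ∑_{j∈ℤ} e^{2πinmj(z₁+z₂)+2πipz₁} q^{nmj²+pj}/(1 − e^{2πinz₁} q^{nj}). -/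

import Mathlib

noncomputable section

open Complex

/-- `e2 w = exp (2 π i w)`; with `q = e^{2πiτ}`, the power `q^x` corresponds to `e2 (x * τ)`. -/
def e2 (w : ℂ) : ℂ := Complex.exp (2 * (Real.pi : ℂ) * Complex.I * w)

/-- Jacobi-type theta function `θ^{(ε)}_{n,m}(τ, z) = ∑_{j∈ℤ} ε^j q^{m(j+n/(2m))²} e^{2πim(j+n/(2m))z}`. -/
def jtheta (ε n m τ z : ℂ) : ℂ :=
  ∑' j : ℤ, ε ^ j *
    e2 (m * ((j : ℂ) + n / (2 * m)) ^ 2 * τ + m * ((j : ℂ) + n / (2 * m)) * z)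

/-- Mock theta function `Φ₁^{(ε)[m,s]}(τ, z₁, z₂)`. -/
def Phi1 (ε m s τ z₁ z₂ : ℂ) : ℂ :=
  ∑' j : ℤ, ε ^ j *
    e2 (m * (j : ℂ) * (z₁ + z₂) + s * z₁ + (m * (j : ℂ) ^ 2 + s * (j : ℂ)) * τ) /
      (1 - e2 (z₁ + (j : ℂ) * τ))

/-- Dedekind eta function `η(τ) = q^{1/24} ∏_{k≥1} (1 - q^k)`. -/
def dedekindEta (τ : ℂ) : ℂ := e2 (τ / 24) * ∏' k : ℕ, (1 - e2 (((k : ℂ) + 1) * τ))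

/-- Jacobi theta `ϑ₁₁(τ, z) = i ∑_{j∈ℤ} (−1)^j q^{(j+1/2)²/2} e^{2πi(j+1/2)z}`. -/
def theta11 (τ z : ℂ) : ℂ :=
  Complex.I * ∑' j : ℤ, (-1 : ℂ) ^ j *
    e2 (((j : ℂ) + 1 / 2) ^ 2 / 2 * τ + ((j : ℂ) + 1 / 2) * z)

/-- Indefinite double sum `(∑_{j,p∈ℤ, 0<p≤j} − ∑_{j,p∈ℤ, j<p≤0}) f j p`. -/
def indefSum (f : ℤ → ℤ → ℂ) : ℂ :=
  ∑' jp : ℤ × ℤ,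
    ((if 0 < jp.2 ∧ jp.2 ≤ jp.1 then f jp.1 jp.2 else 0) -
      (if jp.1 < jp.2 ∧ jp.2 ≤ 0 then f jp.1 jp.2 else 0))

/-- `g^{[m]}_{n,ν}(τ)`. -/
def gfun (m : ℂ) (n ν : ℤ) (τ : ℂ) : ℂ :=
  indefSum fun j p =>
    (-1 : ℂ) ^ j *
      e2 (((m + 1 / 2) * ((j : ℂ) + (ν : ℂ) - ((ν : ℂ) + 1 / 2) / (2 * m + 1)) ^ 2 -
        m * ((p : ℂ) + (ν : ℂ) - (n : ℂ) / (2 * m)) ^ 2) * τ)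

/-- `h^{[m]}_{n,ν}(τ, z)`. -/
def hfun (m : ℂ) (n ν : ℤ) (τ z : ℂ) : ℂ :=
  ∑' j : ℤ,
    e2 (m * (j : ℂ) * z + (n : ℂ) * z / 2 +
        (m * (j : ℂ) ^ 2 + (n : ℂ) * ((j : ℂ) + (ν : ℂ))) * τ) /
      (1 - e2 (m * z + 2 * m * ((j : ℂ) + (ν : ℂ)) * τ))

/-- `G^{[m]}_{n,ν}(τ, z)`. -/
def Gfun (m : ℂ) (n ν : ℤ) (τ z : ℂ) : ℂ :=
  gfun m n ν τ * jtheta 1 (n : ℂ) m τ z +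
    (-1 : ℂ) ^ ν * e2 (-(m * (ν : ℂ) ^ 2) * τ) *
      jtheta (-1) ((ν : ℂ) + 1 / 2) (m + 1 / 2) τ 0 * hfun m n ν τ z

/-- `F^{[m](a,b)}_{n,ν}(τ, z)`. -/
def Ffun (m : ℂ) (a b n ν : ℤ) (τ z : ℂ) : ℂ :=
  e2 ((a : ℂ) * z / 2 + (a : ℂ) ^ 2 / (4 * m) * τ) *
    Gfun m n ν τ (z + (a : ℂ) * τ / m + (b : ℂ) / m)

/-- The coefficient `f_{j,k}` of Lemma 3.1:
`f_{j,k} = (−1)^j q^{(m+1/2)(j+s/(2m+1))² − k²/(4m)} e^{−2πijm(z₁−z₂)+πik(z₁−z₂)}`. -/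
def fcoef (m s τ z₁ z₂ : ℂ) (j k : ℤ) : ℂ :=
  (-1 : ℂ) ^ j *
    e2 (((m + 1 / 2) * ((j : ℂ) + s / (2 * m + 1)) ^ 2 - (k : ℂ) ^ 2 / (4 * m)) * τ +
      (-((j : ℂ) * m) + (k : ℂ) / 2) * (z₁ - z₂))

namespace E2Aux

lemma e2_add (a b : ℂ) : e2 (a + b) = e2 a * e2 b := by
  simp [e2, mul_add, Complex.exp_add]

lemma e2_ne_zero (a : ℂ) : e2 a ≠ 0 := Complex.exp_ne_zero _

lemma e2_zero : e2 0 = 1 := by simp [e2]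

lemma e2_int (t : ℤ) : e2 (t : ℂ) = 1 := by
  rw [e2, show 2 * (Real.pi : ℂ) * Complex.I * t = t * (2 * Real.pi * Complex.I) by ring]
  exact Complex.exp_int_mul_two_pi_mul_I t

lemma e2_add_int (w : ℂ) (t : ℤ) : e2 (w + t) = e2 w := by
  rw [e2_add, e2_int, mul_one]

lemma e2_nat_pow (w : ℂ) (r : ℕ) : e2 w ^ r = e2 ((r : ℂ) * w) := by
  rw [e2, e2, ← Complex.exp_nat_mul]; congr 1; ring

lemma two_pi_I_ne : (2 * (Real.pi : ℂ) * Complex.I) ≠ 0 := by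
  simp [Real.pi_ne_zero, Complex.I_ne_zero, Complex.ofReal_ne_zero]

lemma e2_eq_one_iff (w : ℂ) : e2 w = 1 ↔ ∃ t : ℤ, w = t := by
  rw [e2, Complex.exp_eq_one_iff]
  constructor
  · rintro ⟨t, ht⟩
    refine ⟨t, mul_left_cancel₀ two_pi_I_ne ?_⟩
    rw [ht]; ring
  · rintro ⟨t, rfl⟩
    exact ⟨t, by ring⟩

lemma norm_e2 (w : ℂ) : ‖e2 w‖ = Real.exp (-(2 * Real.pi * w.im)) := by
  rw [e2, Complex.norm_exp]
  congr 1
  simp [Complex.mul_re, Complex.mul_im]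

end E2Aux

namespace E2Aux

lemma orth (n : ℕ) (hn : 0 < n) (d : ℤ) (hd : d ≠ 0) (h1 : -(n : ℤ) < d) (h2 : d < n) :
    ∑ k ∈ Finset.range n, e2 ((d : ℂ) * k / n) = 0 := by
  have hn' : (n : ℂ) ≠ 0 := Nat.cast_ne_zero.mpr hn.ne'
  have hζ : e2 ((d : ℂ) / n) ≠ 1 := by
    rw [Ne, e2_eq_one_iff]
    rintro ⟨t, ht⟩
    rw [div_eq_iff hn'] at ht
    have hdt : d = t * n := by exact_mod_cast ht
    have habs : |d| < (n : ℤ) := abs_lt.mpr ⟨h1, h2⟩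
    rcases eq_or_ne t 0 with rfl | htne
    · simp at hdt; exact hd hdt
    · have : (n : ℤ) ≤ |d| := by
        rw [hdt, abs_mul, abs_of_nonneg (by positivity : (0:ℤ) ≤ (n:ℤ))]
        calc (n : ℤ) = 1 * n := (one_mul _).symm
        _ ≤ |t| * n := by
          have : 1 ≤ |t| := Int.one_le_abs htne
          exact mul_le_mul_of_nonneg_right this (by positivity)
      omega
  have hpow : e2 ((d : ℂ) / n) ^ n = 1 := by
    rw [e2_nat_pow, show (n : ℂ) * ((d : ℂ) / n) = ((d : ℤ) : ℂ) by field_simp]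
    exact e2_int d
  have hgeom := geom_sum_mul (e2 ((d : ℂ) / n)) n
  rw [hpow, sub_self] at hgeom
  have hsum : ∑ k ∈ Finset.range n, e2 ((d : ℂ) / n) ^ k = 0 := by
    rcases mul_eq_zero.mp hgeom with h | h
    · exact h
    · exact absurd (sub_eq_zero.mp h) hζ
  rw [← hsum]
  refine Finset.sum_congr rfl fun k _ => ?_
  rw [e2_nat_pow]; congr 1; ring

lemma keyA (n : ℕ) (hn : 0 < n) (P : ℕ) (hP : P < n) (x : ℂ) (hx : x ^ n ≠ 1)
    (s : ℂ) (hs : s = 1 ∨ s = -1) :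
    ∑ k ∈ Finset.range n, e2 (s * P * k / n) / (1 - x * e2 (-(s * k / n))) =
      n * x ^ P / (1 - x ^ n) := by
  obtain ⟨si, hsi, hsi1⟩ : ∃ si : ℤ, (si : ℂ) = s ∧ |si| = 1 := by
    rcases hs with rfl | rfl
    · exact ⟨1, by norm_num⟩
    · exact ⟨-1, by norm_num⟩
  have hn' : (n : ℂ) ≠ 0 := Nat.cast_ne_zero.mpr hn.ne'
  have hxn : (1 : ℂ) - x ^ n ≠ 0 := sub_ne_zero.mpr fun h => hx h.symm
  have hζn : ∀ k : ℕ, e2 (-(s * k / n)) ^ n = 1 := by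
    intro k
    rw [e2_nat_pow, show (n : ℂ) * -(s * k / n) = ((-(si * k) : ℤ) : ℂ) by
      push_cast [hsi]; field_simp]
    exact e2_int _
  have hxζn : ∀ k : ℕ, (x * e2 (-(s * k / n))) ^ n = x ^ n := by
    intro k; rw [mul_pow, hζn, mul_one]
  have hden : ∀ k : ℕ, (1 : ℂ) - x * e2 (-(s * k / n)) ≠ 0 := by
    intro k h
    apply hx
    have h1 : x * e2 (-(s * k / n)) = 1 := by
      have := sub_eq_zero.mp h; exact this.symm
    rw [← hxζn k, h1, one_pow]
  -- per-k expansion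
  have hperk : ∀ k ∈ Finset.range n,
      e2 (s * P * k / n) / (1 - x * e2 (-(s * k / n))) =
      (∑ r ∈ Finset.range n, e2 (s * P * k / n) * (x * e2 (-(s * k / n))) ^ r) / (1 - x ^ n) := by
    intro k _
    rw [div_eq_div_iff (hden k) hxn]
    have hg := geom_sum_mul (x * e2 (-(s * k / n))) n
    rw [hxζn k] at hg
    rw [← Finset.mul_sum]
    linear_combination (e2 (s * P * k / n)) * hg
  rw [Finset.sum_congr rfl hperk, ← Finset.sum_div, Finset.sum_comm]
  congr 1
  have hinner : ∀ r ∈ Finset.range n,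
      ∑ k ∈ Finset.range n, e2 (s * P * k / n) * (x * e2 (-(s * k / n))) ^ r =
      if r = P then (n : ℂ) * x ^ P else 0 := by
    intro r hr
    have hterm : ∀ k ∈ Finset.range n,
        e2 (s * P * k / n) * (x * e2 (-(s * k / n))) ^ r =
        x ^ r * e2 (((si * ((P : ℤ) - r)) : ℤ) * (k : ℂ) / n) := by
      intro k _
      rw [mul_pow, e2_nat_pow, ← mul_assoc, mul_comm (e2 _) (x ^ r), mul_assoc, ← e2_add]
      congr 2
      push_cast [hsi.symm]
      field_simp
      ring
    rw [Finset.sum_congr rfl hterm, ← Finset.mul_sum]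
    rcases eq_or_ne r P with rfl | hrP
    · simp only [sub_self, mul_zero, Int.cast_zero, zero_mul, zero_div, e2_zero]
      simp [mul_comm]
    · have hd : si * ((P : ℤ) - r) ≠ 0 := by
        intro h
        rcases mul_eq_zero.mp h with h | h
        · simp [h] at hsi1
        · have : (P : ℤ) = r := by linarith [sub_eq_zero.mp h]
          exact hrP (by exact_mod_cast this.symm)
      have habs : |si * ((P : ℤ) - r)| < n := by
        rw [abs_mul, hsi1, one_mul]
        have h1 : (P : ℤ) < n := by exact_mod_cast hP
        have h2 : (r : ℤ) < n := by exact_mod_cast Finset.mem_range.mp hr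
        have h3 : (0 : ℤ) ≤ P := Int.ofNat_nonneg P
        have h4 : (0 : ℤ) ≤ r := Int.ofNat_nonneg r
        rw [abs_lt]; omega
      obtain ⟨hab1, hab2⟩ := abs_lt.mp habs
      rw [orth n hn _ hd hab1 hab2, mul_zero]
      simp [hrP]
  rw [Finset.sum_congr rfl hinner, Finset.sum_ite_eq' (Finset.range n) P
    (fun _ => (n : ℂ) * x ^ P)]
  simp [Finset.mem_range.mpr hP]

end E2Aux

namespace E2Aux

lemma bounded_inv (τ : ℂ) (hτ : 0 < τ.im) (w : ℂ) :
    ∃ C : ℝ, 0 ≤ C ∧ ∀ j : ℤ, ‖(1 - e2 (w + (j : ℂ) * τ))⁻¹‖ ≤ C := by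
  set R : ℝ := Real.exp (-(2 * Real.pi * w.im)) with hR
  have hR0 : 0 < R := Real.exp_pos _
  set s : ℝ := Real.exp (-(2 * Real.pi * τ.im)) with hs
  have hs0 : 0 < s := Real.exp_pos _
  have hs1 : s < 1 := by
    rw [hs, Real.exp_lt_one_iff]
    have : 0 < 2 * Real.pi * τ.im := by positivity
    linarith
  have hnorm : ∀ j : ℤ, ‖e2 (w + (j : ℂ) * τ)‖ =
      R * Real.exp ((j : ℝ) * (-(2 * Real.pi * τ.im))) := by
    intro j
    rw [e2_add, norm_mul, norm_e2, norm_e2, hR, ← Real.exp_add, ← Real.exp_add]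
    congr 1
    have him : ((j : ℂ) * τ).im = (j : ℝ) * τ.im := by
      simp [Complex.mul_im]
    rw [him]; ring
  obtain ⟨J₁, hJ₁⟩ : ∃ J : ℕ, s ^ J < 1 / (2 * R) :=
    exists_pow_lt_of_lt_one (by positivity) hs1
  obtain ⟨J₂, hJ₂⟩ : ∃ J : ℕ, s ^ J < R / 2 :=
    exists_pow_lt_of_lt_one (by positivity) hs1
  set J : ℕ := max J₁ J₂ with hJ
  have hmono : ∀ (a b : ℤ), a ≤ b →
      Real.exp ((b : ℝ) * (-(2 * Real.pi * τ.im))) ≤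
      Real.exp ((a : ℝ) * (-(2 * Real.pi * τ.im))) := by
    intro a b hab
    apply Real.exp_le_exp.mpr
    have h1 : (a : ℝ) ≤ b := by exact_mod_cast hab
    have h2 : (0:ℝ) ≤ 2 * Real.pi * τ.im := by positivity
    nlinarith
  have hsJ : ∀ (J' : ℕ), Real.exp ((J' : ℝ) * (-(2 * Real.pi * τ.im))) = s ^ J' := by
    intro J'
    rw [hs, ← Real.exp_nat_mul]
  have h0mem : (0 : ℤ) ∈ Finset.Icc (-(J : ℤ)) (J : ℤ) := by simp
  set C : ℝ := max 2 ((Finset.Icc (-(J : ℤ)) (J : ℤ)).sup' ⟨0, h0mem⟩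
      fun j => ‖(1 - e2 (w + (j : ℂ) * τ))⁻¹‖) with hC
  refine ⟨C, le_trans (by norm_num) (le_max_left _ _), ?_⟩
  intro j
  by_cases hj : j ∈ Finset.Icc (-(J : ℤ)) (J : ℤ)
  · exact le_trans
      (Finset.le_sup' (fun j : ℤ => ‖(1 - e2 (w + (j : ℂ) * τ))⁻¹‖) hj)
      (le_max_right _ _)
  · rw [Finset.mem_Icc, not_and_or, not_le, not_le] at hj
    rcases hj with hj | hj
    · -- j < -J : norm of e2 is big
      have h2 : Real.exp (((-(J₂:ℤ) : ℤ) : ℝ) * (-(2 * Real.pi * τ.im))) = (s ^ J₂)⁻¹ := by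
        rw [← hsJ J₂, ← Real.exp_neg]
        congr 1
        push_cast
        ring
      have h1 : Real.exp (((-(J₂:ℤ) : ℤ) : ℝ) * (-(2 * Real.pi * τ.im))) ≤
          Real.exp ((j : ℝ) * (-(2 * Real.pi * τ.im))) := by
        apply hmono
        have : (J₂ : ℤ) ≤ J := by exact_mod_cast le_max_right J₁ J₂
        omega
      have h3 : 2 / R ≤ (s ^ J₂)⁻¹ := by
        have h5 : (0:ℝ) < s ^ J₂ := by positivity
        calc 2 / R = (R / 2)⁻¹ := by rw [inv_div]
        _ ≤ (s ^ J₂)⁻¹ := inv_anti₀ h5 (le_of_lt hJ₂)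
      have hbig : 2 ≤ ‖e2 (w + (j : ℂ) * τ)‖ := by
        rw [hnorm]
        calc (2:ℝ) = R * (2 / R) := by field_simp
        _ ≤ R * (s ^ J₂)⁻¹ := by nlinarith
        _ = R * Real.exp (((-(J₂:ℤ) : ℤ) : ℝ) * (-(2 * Real.pi * τ.im))) := by rw [h2]
        _ ≤ R * Real.exp ((j : ℝ) * (-(2 * Real.pi * τ.im))) :=
            mul_le_mul_of_nonneg_left h1 hR0.le
      have hd : 1 ≤ ‖1 - e2 (w + (j : ℂ) * τ)‖ := by
        have h6 := norm_sub_norm_le (e2 (w + (j : ℂ) * τ)) (1 : ℂ)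
        rw [norm_one, norm_sub_rev] at h6
        linarith
      rw [norm_inv]
      calc ‖1 - e2 (w + (j : ℂ) * τ)‖⁻¹ ≤ 1 := inv_le_one_of_one_le₀ hd
      _ ≤ 2 := by norm_num
      _ ≤ C := le_max_left _ _
    · -- J < j : norm of e2 is small
      have hsmall : ‖e2 (w + (j : ℂ) * τ)‖ ≤ 1 / 2 := by
        rw [hnorm]
        have h1 : Real.exp ((j : ℝ) * (-(2 * Real.pi * τ.im))) ≤
            Real.exp (((J₁:ℤ) : ℝ) * (-(2 * Real.pi * τ.im))) := by
          apply hmono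
          have : (J₁ : ℤ) ≤ J := by exact_mod_cast le_max_left J₁ J₂
          omega
        have h2 : Real.exp (((J₁:ℤ) : ℝ) * (-(2 * Real.pi * τ.im))) = s ^ J₁ := by
          rw [← hsJ J₁]
          norm_num
        rw [h2] at h1
        calc R * Real.exp ((j : ℝ) * (-(2 * Real.pi * τ.im))) ≤ R * s ^ J₁ := by nlinarith
        _ ≤ R * (1 / (2 * R)) := by nlinarith
        _ = 1 / 2 := by field_simp
      have hd : 1 / 2 ≤ ‖1 - e2 (w + (j : ℂ) * τ)‖ := by
        have h6 := norm_sub_norm_le (1 : ℂ) (e2 (w + (j : ℂ) * τ))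
        rw [norm_one] at h6
        linarith
      rw [norm_inv]
      calc ‖1 - e2 (w + (j : ℂ) * τ)‖⁻¹ ≤ (1 / 2 : ℝ)⁻¹ :=
            inv_anti₀ (by norm_num) hd
      _ = 2 := by norm_num
      _ ≤ C := le_max_left _ _

lemma summable_aux (r : ℝ) (hr : 0 < r) (σ τ w : ℂ) (hτ : 0 < τ.im) :
    Summable (fun j : ℤ =>
      e2 ((r : ℂ) * (j : ℂ) * σ + (r : ℂ) * (j : ℂ) ^ 2 * τ) / (1 - e2 (w + (j : ℂ) * τ))) := by
  obtain ⟨C, hC0, hC⟩ := bounded_inv τ hτ w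
  have hτ' : 0 < (((2 * r : ℝ) : ℂ) * τ).im := by
    rw [show (((2 * r : ℝ) : ℂ) * τ).im = (2 * r) * τ.im by simp [Complex.mul_im]]
    positivity
  have hsum : Summable fun j : ℤ => jacobiTheta₂_term j ((r : ℂ) * σ) (((2 * r : ℝ) : ℂ) * τ) :=
    (summable_jacobiTheta₂_term_iff _ _).mpr hτ'
  have heq : ∀ j : ℤ, e2 ((r : ℂ) * (j : ℂ) * σ + (r : ℂ) * (j : ℂ) ^ 2 * τ) =
      jacobiTheta₂_term j ((r : ℂ) * σ) (((2 * r : ℝ) : ℂ) * τ) := by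
    intro j
    rw [jacobiTheta₂_term, e2]
    congr 1
    push_cast
    ring
  apply Summable.of_norm_bounded
    (g := fun j => ‖jacobiTheta₂_term j ((r : ℂ) * σ) (((2 * r : ℝ) : ℂ) * τ)‖ * C)
    ((summable_norm_iff.mpr hsum).mul_right C)
  intro j
  rw [div_eq_mul_inv, norm_mul, heq j]
  exact mul_le_mul_of_nonneg_left (hC j) (norm_nonneg _)

end E2Aux

namespace E2Aux

lemma core (M : ℕ) (hM : 0 < M) (n : ℕ) (hn : 0 < n) (p : ℤ) (hp0 : 0 ≤ p) (hpn : p < (n : ℤ))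
    (τ : ℂ) (hτ : 0 < τ.im) (z₁ z₂ : ℂ)
    (hz : ∀ a b : ℤ, (n : ℂ) * z₁ ≠ (a : ℂ) + (b : ℂ) * τ)
    (ε : ℂ) (hε : ε = 1 ∨ ε = -1) (s : ℂ) (hs : s = 1 ∨ s = -1) :
    ∑ k ∈ Finset.range n, e2 (s * (p : ℂ) * (k : ℂ) / (n : ℂ)) *
        Phi1 1 ((n : ℂ) * ((M : ℂ) / 2)) 0 τ (z₁ - s * ((k : ℂ) / (n : ℂ)))
          (z₂ + ε * ((k : ℂ) / (n : ℂ))) =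
      (n : ℂ) * ∑' j : ℤ,
        e2 ((n : ℂ) * ((M : ℂ) / 2) * (j : ℂ) * (z₁ + z₂) + (p : ℂ) * z₁ +
            ((n : ℂ) * ((M : ℂ) / 2) * (j : ℂ) ^ 2 + (p : ℂ) * (j : ℂ)) * τ) /
          (1 - e2 ((n : ℂ) * z₁ + (n : ℂ) * (j : ℂ) * τ)) := by
  have hn' : (n : ℂ) ≠ 0 := Nat.cast_ne_zero.mpr hn.ne'
  set r : ℝ := n * M / 2 with hrdef
  have hr : 0 < r := by positivity
  have hrc : ((r : ℝ) : ℂ) = (n : ℂ) * ((M : ℂ) / 2) := by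
    rw [hrdef]
    push_cast
    ring
  set P : ℕ := p.toNat with hPdef
  have hPp : ((P : ℕ) : ℂ) = (p : ℂ) := by
    have : ((P : ℕ) : ℤ) = p := Int.toNat_of_nonneg hp0
    exact_mod_cast congrArg (Int.cast : ℤ → ℂ) this
  have hPn : P < n := by omega
  obtain ⟨δ, hδ⟩ : ∃ δ : ℤ, ε = s + 2 * (δ : ℂ) := by
    rcases hε with rfl | rfl <;> rcases hs with rfl | rfl
    · exact ⟨0, by norm_num⟩
    · exact ⟨1, by norm_num⟩
    · exact ⟨-1, by push_cast; ring⟩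
    · exact ⟨0, by norm_num⟩
  set c : ℤ → ℂ := fun j => e2 ((r : ℂ) * j * (z₁ + z₂) + (r : ℂ) * j ^ 2 * τ) with hc
  set y : ℤ → ℂ := fun j => e2 (z₁ + j * τ) with hy
  -- step 1 : rewrite each Phi1
  have hk : ∀ k ∈ Finset.range n,
      e2 (s * (p : ℂ) * (k : ℂ) / (n : ℂ)) *
        Phi1 1 ((n : ℂ) * ((M : ℂ) / 2)) 0 τ (z₁ - s * ((k : ℂ) / (n : ℂ)))
          (z₂ + ε * ((k : ℂ) / (n : ℂ))) =
      ∑' j : ℤ, e2 (s * (P : ℂ) * (k : ℂ) / (n : ℂ)) *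
        (c j / (1 - y j * e2 (-(s * (k : ℂ) / (n : ℂ))))) := by
    intro k _
    rw [tsum_mul_left]
    congr 1
    · rw [hPp]
    · rw [Phi1]
      apply tsum_congr
      intro j
      rw [one_zpow, one_mul]
      have hnum : (n : ℂ) * ((M : ℂ) / 2) * (j : ℂ) *
            ((z₁ - s * ((k : ℂ) / (n : ℂ))) + (z₂ + ε * ((k : ℂ) / (n : ℂ)))) +
            0 * (z₁ - s * ((k : ℂ) / (n : ℂ))) +
            ((n : ℂ) * ((M : ℂ) / 2) * (j : ℂ) ^ 2 + 0 * (j : ℂ)) * τ =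
          ((r : ℂ) * j * (z₁ + z₂) + (r : ℂ) * j ^ 2 * τ) + (((M : ℤ) * j * δ * k : ℤ) : ℂ) := by
        rw [hδ, hrc]
        push_cast
        field_simp
        ring
      have hden : e2 ((z₁ - s * ((k : ℂ) / (n : ℂ))) + (j : ℂ) * τ) =
          y j * e2 (-(s * (k : ℂ) / (n : ℂ))) := by
        rw [hy]
        show e2 _ = e2 (z₁ + (j : ℂ) * τ) * e2 _
        rw [← e2_add]
        congr 1
        ring
      rw [hnum, e2_add_int, hden, hc]
  rw [Finset.sum_congr rfl hk]
  -- step 2 : summability and swap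
  have hsummable : ∀ k ∈ Finset.range n,
      Summable (fun j : ℤ => e2 (s * (P : ℂ) * (k : ℂ) / (n : ℂ)) *
        (c j / (1 - y j * e2 (-(s * (k : ℂ) / (n : ℂ)))))) := by
    intro k _
    apply Summable.mul_left
    have heqfun : (fun j : ℤ => c j / (1 - y j * e2 (-(s * (k : ℂ) / (n : ℂ))))) =
        fun j : ℤ => e2 ((r : ℂ) * (j : ℂ) * (z₁ + z₂) + (r : ℂ) * (j : ℂ) ^ 2 * τ) /
          (1 - e2 ((z₁ - s * ((k : ℂ) / (n : ℂ))) + (j : ℂ) * τ)) := by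
      funext j
      rw [hc, hy]
      congr 2
      show e2 _ * e2 _ = e2 _
      rw [← e2_add]
      congr 1
      ring
    rw [heqfun]
    exact summable_aux r hr (z₁ + z₂) τ (z₁ - s * ((k : ℂ) / (n : ℂ))) hτ
  rw [← Summable.tsum_finsetSum hsummable]
  -- step 3 : evaluate the inner finite sum via keyA, and match with RHS
  rw [← tsum_mul_left]
  apply tsum_congr
  intro j
  have hx : y j ^ n ≠ 1 := by
    rw [hy]
    show e2 (z₁ + (j : ℂ) * τ) ^ n ≠ 1
    rw [e2_nat_pow, Ne, e2_eq_one_iff]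
    rintro ⟨t, ht⟩
    exact hz t (-(n * j)) (by push_cast; linear_combination ht)
  have hsplit : ∑ k ∈ Finset.range n, e2 (s * (P : ℂ) * (k : ℂ) / (n : ℂ)) *
      (c j / (1 - y j * e2 (-(s * (k : ℂ) / (n : ℂ))))) =
      c j * ∑ k ∈ Finset.range n, e2 (s * (P : ℂ) * (k : ℂ) / (n : ℂ)) /
        (1 - y j * e2 (-(s * (k : ℂ) / (n : ℂ)))) := by
    rw [Finset.mul_sum]
    refine Finset.sum_congr rfl fun k _ => ?_
    ring
  rw [hsplit, keyA n hn P hPn (y j) hx s hs]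
  have hyP : y j ^ P = e2 ((P : ℂ) * (z₁ + (j : ℂ) * τ)) := e2_nat_pow _ _
  have hyn : y j ^ n = e2 ((n : ℂ) * (z₁ + (j : ℂ) * τ)) := e2_nat_pow _ _
  rw [hyP, hyn]
  have hnum2 : c j * e2 ((P : ℂ) * (z₁ + (j : ℂ) * τ)) =
      e2 ((n : ℂ) * ((M : ℂ) / 2) * (j : ℂ) * (z₁ + z₂) + (p : ℂ) * z₁ +
        ((n : ℂ) * ((M : ℂ) / 2) * (j : ℂ) ^ 2 + (p : ℂ) * (j : ℂ)) * τ) := by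
    rw [hc]
    show e2 _ * e2 _ = e2 _
    rw [← e2_add]
    congr 1
    rw [hrc, hPp]
    ring
  have hden2 : e2 ((n : ℂ) * (z₁ + (j : ℂ) * τ)) = e2 ((n : ℂ) * z₁ + (n : ℂ) * (j : ℂ) * τ) := by
    congr 1
    ring
  rw [hden2, ← hnum2]
  ring

end E2Aux

theorem stmt_1 (M : ℕ) (hM : 0 < M) (m : ℂ) (hm : m = (M : ℂ) / 2)
    (n : ℕ) (hn : 0 < n) (p : ℤ) (hp0 : 0 ≤ p) (hpn : p < (n : ℤ))
    (τ : ℂ) (hτ : 0 < τ.im) (z₁ z₂ : ℂ)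
    (hz : ∀ a b : ℤ, (n : ℂ) * z₁ ≠ (a : ℂ) + (b : ℂ) * τ)
    (ε : ℂ) (hε : ε = 1 ∨ ε = -1) :
    (∑ k ∈ Finset.range n, e2 ((p : ℂ) * (k : ℂ) / (n : ℂ)) *
        Phi1 1 ((n : ℂ) * m) 0 τ (z₁ - (k : ℂ) / (n : ℂ)) (z₂ + ε * ((k : ℂ) / (n : ℂ))) =
      (n : ℂ) * ∑' j : ℤ,
        e2 ((n : ℂ) * m * (j : ℂ) * (z₁ + z₂) + (p : ℂ) * z₁ +
            ((n : ℂ) * m * (j : ℂ) ^ 2 + (p : ℂ) * (j : ℂ)) * τ) /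
          (1 - e2 ((n : ℂ) * z₁ + (n : ℂ) * (j : ℂ) * τ))) ∧
    (∑ k ∈ Finset.range n, e2 (-((p : ℂ) * (k : ℂ) / (n : ℂ))) *
        Phi1 1 ((n : ℂ) * m) 0 τ (z₁ + (k : ℂ) / (n : ℂ)) (z₂ + ε * ((k : ℂ) / (n : ℂ))) =
      (n : ℂ) * ∑' j : ℤ,
        e2 ((n : ℂ) * m * (j : ℂ) * (z₁ + z₂) + (p : ℂ) * z₁ +
            ((n : ℂ) * m * (j : ℂ) ^ 2 + (p : ℂ) * (j : ℂ)) * τ) /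
          (1 - e2 ((n : ℂ) * z₁ + (n : ℂ) * (j : ℂ) * τ))) := by
  subst hm
  constructor
  · have h := E2Aux.core M hM n hn p hp0 hpn τ hτ z₁ z₂ hz ε hε 1 (Or.inl rfl)
    simpa using h
  · have h := E2Aux.core M hM n hn p hp0 hpn τ hτ z₁ z₂ hz ε hε (-1) (Or.inr rfl)
    simpa [neg_mul, neg_div, sub_neg_eq_add] using h
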